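/- There is an absolute constant C with the following property. Let Δ be a finite alphabet, let m ≥ 1, and let h : ℕ → Δ be generated by a Fibonacci-DFAO with at most m states. Then for all integers n ≥ 1 and 0 ≤ c < n there exist a finite alphabet A, a letter a₀ ∈ A, a morphism γ : A → A⁺ (mapping each letter to a nonempty word over A) of size Σ_{a∈A} |γ(a)| ≤ C·m²·n⁴ that is prolongable on a₀ (γ(a₀) begins with a₀ and |γ^k(a₀)| → ∞), an infinite fixed point w : ℕ → A of γ, and a coding τ : A → Δ such that τ(w(i)) = h(n·i + c) for all i ≥ 0. -/

import Mathlib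

/-- The Fibonacci (Zeckendorf) value of a binary word written msd-first:
`[x₁⋯x_ℓ] = Σ_j x_j · F_{ℓ−j+2}`. -/
def fibVal : List Bool → ℕ
  | [] => 0
  | a :: rest => (if a then Nat.fib (rest.length + 2) else 0) + fibVal rest

/-- A binary word is a valid Fibonacci representation if it has no factor `11`. -/
def ValidFib (w : List Bool) : Prop :=
  w.Chain' (fun a b => a = false ∨ b = false)

/-- A deterministic finite automaton with output (DFAO). -/
structure DFAO (α : Type*) (σ : Type*) (Δ : Type*) where
  step : σ → α → σ
  start : σ
  out : σ → Δ

/-- The output of a DFAO on an input word. -/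
def DFAO.eval {α σ Δ : Type*} (M : DFAO α σ Δ) (w : List α) : Δ :=
  M.out (w.foldl M.step M.start)

/-- `h : ℕ → Δ` is generated by a Fibonacci-DFAO with at most `m` states. -/
def FibGeneratedBy {Δ : Type*} (h : ℕ → Δ) (m : ℕ) : Prop :=
  ∃ (σ : Type) (_ : Fintype σ) (M : DFAO Bool σ Δ),
    Fintype.card σ ≤ m ∧ ∀ w : List Bool, ValidFib w → M.eval w = h (fibVal w)

/-- Apply a morphism (given by its action on letters) to a word, by concatenation. -/
def applyMorphism {A : Type*} (γ : A → List A) (w : List A) : List A :=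
  w.flatMap γ

/-- `w : ℕ → A` is an infinite fixed point of the morphism `γ`: the concatenation
`γ(w 0) γ(w 1) γ(w 2) ⋯` spells out `w` itself. -/
def IsFixedPointOf {A : Type*} (γ : A → List A) (w : ℕ → A) : Prop :=
  ∃ ℓ : ℕ → ℕ, ℓ 0 = 0 ∧ (∀ i, ℓ (i + 1) = ℓ i + (γ (w i)).length) ∧
    ∀ i : ℕ, ∀ j : ℕ, (hj : j < (γ (w i)).length) → w (ℓ i + j) = (γ (w i))[j]

namespace ZeckAux

lemma fib_succ_succ (L : ℕ) : Nat.fib (L + 2) = Nat.fib L + Nat.fib (L + 1) :=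
  Nat.fib_add_two

lemma fibVal_nil : fibVal [] = 0 := rfl

lemma fibVal_cons (a : Bool) (w : List Bool) :
    fibVal (a :: w) = (if a then Nat.fib (w.length + 2) else 0) + fibVal w := rfl

lemma fibVal_append_singleton (w : List Bool) (b : Bool) :
    fibVal (w ++ [b]) = fibVal (w ++ [false]) + (if b then 1 else 0) := by
  induction w with
  | nil => cases b <;> simp [fibVal]
  | cons a w ih =>
      simp only [List.cons_append, fibVal_cons, ih, List.length_append, List.length_cons,
        List.length_nil, List.length_singleton, add_assoc]

lemma fibVal_append_two (w : List Bool) (b : Bool) :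
    fibVal (w ++ [b, false]) = fibVal (w ++ [false]) + fibVal w + (if b then 2 else 0) := by
  induction w with
  | nil =>
      cases b <;> simp [fibVal] <;> rfl
  | cons a w ih =>
      simp only [List.cons_append, fibVal_cons, ih, List.length_append, List.length_cons,
        List.length_nil, List.length_singleton, add_assoc]
      norm_num
      have h1 : Nat.fib (w.length + 4) = Nat.fib (w.length + 2) + Nat.fib (w.length + 3) := by
        have := fib_succ_succ (w.length + 2)
        have e : w.length + 2 + 2 = w.length + 4 := by omega
        have e2 : w.length + 2 + 1 = w.length + 3 := by omega
        rw [e, e2] at this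
        exact this
      cases a <;> simp <;> omega

lemma validFib_append_false {w : List Bool} (h : ValidFib w) : ValidFib (w ++ [false]) := by
  unfold ValidFib List.Chain' at *
  rw [List.isChain_append]
  refine ⟨h, by simp, ?_⟩
  intro x _ y hy
  simp at hy
  subst hy
  right; rfl

lemma validFib_append_true {w : List Bool} (h : ValidFib w)
    (hl : w.getLastD false = false) : ValidFib (w ++ [true]) := by
  unfold ValidFib List.Chain' at *
  rw [List.isChain_append]
  refine ⟨h, by simp, ?_⟩
  intro x hx y hy
  simp at hy
  subst hy
  left
  cases w with
  | nil => simp at hx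
  | cons a w' =>
      have hh : x = (a :: w').getLast (by simp) := by
        have h2 := List.getLast?_eq_getLast (l := a :: w') (by simp)
        rw [h2] at hx
        simpa using hx.symm
      subst hh
      rwa [List.getLastD_eq_getLast?, List.getLast?_eq_getLast (l := a :: w') (by simp),
        Option.getD_some] at hl

lemma fibVal_lt : ∀ (w : List Bool), ValidFib w → fibVal w < Nat.fib (w.length + 2)
  | [], _ => by simp [fibVal]
  | (false :: w'), h => by
      have ih := fibVal_lt w' h.tail
      have hm : Nat.fib (w'.length + 2) ≤ Nat.fib (w'.length + 1 + 2) :=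
        Nat.fib_mono (by omega)
      simpa [fibVal] using lt_of_lt_of_le ih hm
  | (true :: []), _ => by
      simp [fibVal]
      decide
  | (true :: false :: w'), h => by
      have ih := fibVal_lt w' h.tail.tail
      have h2 : Nat.fib (w'.length + 4) = Nat.fib (w'.length + 2) + Nat.fib (w'.length + 3) := by
        have := fib_succ_succ (w'.length + 2)
        have e : w'.length + 2 + 2 = w'.length + 4 := by omega
        have e2 : w'.length + 2 + 1 = w'.length + 3 := by omega
        rw [e, e2] at this
        exact this
      simp only [fibVal_cons, List.length_cons, if_true, if_false, add_assoc]
      norm_num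
      omega
  | (true :: true :: w'), h => by
      exfalso
      have := (List.isChain_cons_cons.mp h).1
      simp at this

lemma fib_le_fibVal {w : List Bool} (hw : w.head? = some true) :
    Nat.fib (w.length + 1) ≤ fibVal w := by
  cases w with
  | nil => simp at hw
  | cons a w' =>
      have : a = true := by simpa using hw
      subst this
      simp [fibVal]

end ZeckAux

namespace ZeckAux

def rep : ℕ → ℕ → List Bool
  | 0, _ => []
  | (t+1), v =>
      if v < Nat.fib (t + 2) then false :: rep t v else true :: rep t (v - Nat.fib (t + 2))

lemma rep_length : ∀ t v, (rep t v).length = t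
  | 0, _ => rfl
  | (t+1), v => by
      unfold rep
      split <;> simp [rep_length t]

lemma rep_fibVal : ∀ t v, v < Nat.fib (t + 2) → fibVal (rep t v) = v
  | 0, v, h => by
      interval_cases v
      rfl
  | (t+1), v, h => by
      unfold rep
      split
      · next hv =>
          simp [fibVal_cons, rep_length, rep_fibVal t v hv]
      · next hv =>
          push_neg at hv
          have hlt : v - Nat.fib (t + 2) < Nat.fib (t + 2) := by
            have h3 : Nat.fib (t + 1 + 2) = Nat.fib (t + 1) + Nat.fib (t + 2) := fib_succ_succ _
            have hm : Nat.fib (t + 1) ≤ Nat.fib (t + 2) := Nat.fib_mono (by omega)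
            omega
          simp [fibVal_cons, rep_length, rep_fibVal t _ hlt]
          omega

lemma rep_head_false {t v : ℕ} (h : v < Nat.fib (t + 1)) (ht : 1 ≤ t) :
    (rep t v).head? = some false := by
  cases t with
  | zero => omega
  | succ t' =>
      unfold rep
      have : v < Nat.fib (t' + 2) := h
      simp [this]

lemma rep_valid : ∀ t v, v < Nat.fib (t + 2) → ValidFib (rep t v)
  | 0, v, _ => List.isChain_nil
  | (t+1), v, h => by
      unfold rep
      split
      · next hv =>
          have ih := rep_valid t v hv
          cases t with
          | zero => simp [rep]; exact List.isChain_singleton _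
          | succ t' =>
              unfold ValidFib List.Chain' at ih ⊢
              rw [List.isChain_cons]
              exact ⟨fun y _ => Or.inl rfl, ih⟩
      · next hv =>
          push_neg at hv
          have hlt : v - Nat.fib (t + 2) < Nat.fib (t + 1) := by
            have h3 : Nat.fib (t + 1 + 2) = Nat.fib (t + 1) + Nat.fib (t + 2) := fib_succ_succ _
            omega
          have hlt2 : v - Nat.fib (t + 2) < Nat.fib (t + 2) :=
            lt_of_lt_of_le hlt (Nat.fib_mono (by omega))
          have ih := rep_valid t _ hlt2
          unfold ValidFib List.Chain' at ih ⊢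
          rw [List.isChain_cons]
          refine ⟨?_, ih⟩
          intro y hy
          cases t with
          | zero => simp [rep] at hy
          | succ t' =>
              rw [rep_head_false hlt (by omega)] at hy
              right
              simpa using hy.symm

lemma rep_unique : ∀ (w : List Bool), ValidFib w → rep w.length (fibVal w) = w
  | [], _ => rfl
  | (false :: w'), h => by
      have ih := rep_unique w' h.tail
      have hlt : fibVal w' < Nat.fib (w'.length + 2) := fibVal_lt w' h.tail
      simp only [List.length_cons, fibVal_cons, if_false]
      unfold rep
      simp [hlt, ih]
  | (true :: w'), h => by
      have ih := rep_unique w' h.tail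
      simp only [List.length_cons, fibVal_cons, if_true]
      unfold rep
      have hge : ¬ (Nat.fib (w'.length + 2) + fibVal w' < Nat.fib (w'.length + 2)) := by omega
      simp [hge, ih]

lemma succ_le_fib (v : ℕ) : v + 1 ≤ Nat.fib (v + 2) := by
  induction v with
  | zero => decide
  | succ k ih =>
      have h1 : Nat.fib (k + 1 + 2) = Nat.fib (k + 1) + Nat.fib (k + 2) := fib_succ_succ _
      have h2 : 1 ≤ Nat.fib (k + 1) := Nat.fib_pos.mpr (by omega)
      omega

lemma exists_fib_gt (v : ℕ) : ∃ t, v < Nat.fib (t + 2) :=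
  ⟨v, lt_of_lt_of_le (Nat.lt_succ_self v) (succ_le_fib v)⟩

def zeck (v : ℕ) : List Bool := rep (Nat.find (exists_fib_gt v)) v

lemma zeck_lt (v : ℕ) : v < Nat.fib ((zeck v).length + 2) := by
  rw [zeck, rep_length]
  exact Nat.find_spec (exists_fib_gt v)

lemma fibVal_zeck (v : ℕ) : fibVal (zeck v) = v :=
  rep_fibVal _ _ (Nat.find_spec (exists_fib_gt v))

lemma valid_zeck (v : ℕ) : ValidFib (zeck v) :=
  rep_valid _ _ (Nat.find_spec (exists_fib_gt v))

lemma zeck_zero : zeck 0 = [] := by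
  have : Nat.find (exists_fib_gt 0) = 0 := by
    rw [Nat.find_eq_zero]
    decide
  rw [zeck, this]
  rfl

lemma zeck_head {v : ℕ} (hv : 1 ≤ v) : (zeck v).head? = some true := by
  rw [zeck]
  rcases ht : Nat.find (exists_fib_gt v) with _ | t'
  · exfalso
    have := Nat.find_spec (exists_fib_gt v)
    rw [ht] at this
    simp [Nat.fib] at this
    omega
  · have hmin : ¬ (v < Nat.fib (t' + 2)) := by
      have := Nat.find_min (exists_fib_gt v) (m := t') (by omega)
      exact this
    unfold rep
    simp [hmin]

lemma zeck_unique (w : List Bool) (hw : ValidFib w)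
    (h0 : w = [] ∨ w.head? = some true) : zeck (fibVal w) = w := by
  rcases h0 with h0 | h0
  · subst h0
    exact zeck_zero
  · have hfind : Nat.find (exists_fib_gt (fibVal w)) = w.length := by
      rw [Nat.find_eq_iff]
      refine ⟨fibVal_lt w hw, ?_⟩
      intro k hk
      push_neg
      calc Nat.fib (k + 2) ≤ Nat.fib (w.length + 1) := Nat.fib_mono (by omega)
        _ ≤ fibVal w := fib_le_fibVal h0
    rw [zeck, hfind]
    exact rep_unique w hw

end ZeckAux

namespace ZeckAux

def Lf (y : ℕ) : ℕ := fibVal (zeck y ++ [false])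

def lastZ (y : ℕ) : Bool := (zeck y).getLastD false

lemma Lf_zero : Lf 0 = 0 := by
  rw [Lf, zeck_zero]
  rfl

lemma zeck_ne_nil {y : ℕ} (hy : 1 ≤ y) : zeck y ≠ [] := by
  intro h
  have := fibVal_zeck y
  rw [h] at this
  simp [fibVal] at this
  omega

lemma zeck_L {y : ℕ} (hy : 1 ≤ y) : zeck (Lf y) = zeck y ++ [false] := by
  have h1 : fibVal (zeck y ++ [false]) = Lf y := rfl
  rw [← h1]
  apply zeck_unique
  · exact validFib_append_false (valid_zeck y)
  · right
    cases hz : zeck y with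
    | nil => exact absurd hz (zeck_ne_nil hy)
    | cons a w' =>
        have : a = true := by
          have := zeck_head hy
          rw [hz] at this
          simpa using this
        subst this
        simp

lemma zeck_L1 {y : ℕ} (hl : lastZ y = false) : zeck (Lf y + 1) = zeck y ++ [true] := by
  have h1 : fibVal (zeck y ++ [true]) = Lf y + 1 := by
    rw [fibVal_append_singleton]
    simp [Lf]
  rw [← h1]
  apply zeck_unique
  · exact validFib_append_true (valid_zeck y) hl
  · right
    cases hz : zeck y with
    | nil => simp
    | cons a w' =>
        have hy1 : 1 ≤ y := by
          by_contra h
          have : y = 0 := by omega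
          subst this
          rw [zeck_zero] at hz
          exact (List.cons_ne_nil a w') hz.symm
        have : a = true := by
          have := zeck_head hy1
          rw [hz] at this
          simpa using this
        subst this
        simp

lemma Lf_LL (y : ℕ) : Lf (Lf y) = Lf y + y := by
  rcases Nat.eq_zero_or_pos y with h | h
  · subst h
    rw [Lf_zero, Lf_zero]
  · rw [Lf, zeck_L h, List.append_assoc]
    have : ([false] ++ [false] : List Bool) = [false, false] := rfl
    rw [this, fibVal_append_two (zeck y) false, fibVal_zeck]
    simp [Lf]

lemma Lf_LL1 {y : ℕ} (hl : lastZ y = false) : Lf (Lf y + 1) = Lf y + y + 2 := by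
  rw [Lf, zeck_L1 hl, List.append_assoc]
  have : ([true] ++ [false] : List Bool) = [true, false] := rfl
  rw [this, fibVal_append_two (zeck y) true, fibVal_zeck]
  simp [Lf]

lemma lastZ_L {y : ℕ} (hy : 1 ≤ y) : lastZ (Lf y) = false := by
  rw [lastZ, zeck_L hy, List.getLastD_concat]

lemma lastZ_L1 {y : ℕ} (hl : lastZ y = false) : lastZ (Lf y + 1) = true := by
  rw [lastZ, zeck_L1 hl, List.getLastD_concat]

lemma shift_lt_shift : ∀ (u v : List Bool), ValidFib u → ValidFib v →
    u.length = v.length → fibVal u < fibVal v →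
    fibVal (u ++ [false]) < fibVal (v ++ [false])
  | [], [], _, _, _, hval => absurd hval (lt_irrefl _)
  | [], (b :: v'), _, _, hlen, _ => by simp at hlen
  | (a :: u'), [], _, _, hlen, _ => by simp at hlen
  | (false :: u'), (false :: v'), hu, hv, hlen, hval => by
      have hlen' : u'.length = v'.length := by simpa using hlen
      have ih := shift_lt_shift u' v' hu.tail hv.tail hlen'
        (by simpa [fibVal_cons] using hval)
      simpa [fibVal_cons, hlen'] using ih
  | (false :: u'), (true :: v'), hu, hv, hlen, hval => by
      have hlen' : u'.length = v'.length := by simpa using hlen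
      have h1 : fibVal (u' ++ [false]) < Nat.fib (u'.length + 1 + 2) := by
        have := fibVal_lt (u' ++ [false]) (validFib_append_false hu.tail)
        simpa using this
      calc fibVal ((false :: u') ++ [false]) = fibVal (u' ++ [false]) := by
            simp [fibVal_cons]
        _ < Nat.fib (u'.length + 1 + 2) := h1
        _ ≤ fibVal ((true :: v') ++ [false]) := by
            simp only [List.cons_append, fibVal_cons, if_true, List.length_append,
              List.length_singleton, hlen']
            omega
  | (true :: u'), (false :: v'), hu, hv, hlen, hval => by
      exfalso
      have hlen' : u'.length = v'.length := by simpa using hlen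
      have h1 : fibVal v' < Nat.fib (v'.length + 2) := fibVal_lt v' hv.tail
      simp only [fibVal_cons, if_true, if_false] at hval
      norm_num at hval
      rw [hlen'] at hval
      omega
  | (true :: u'), (true :: v'), hu, hv, hlen, hval => by
      have hlen' : u'.length = v'.length := by simpa using hlen
      have ih := shift_lt_shift u' v' hu.tail hv.tail hlen'
        (by simp only [fibVal_cons, if_true, hlen'] at hval; omega)
      simp only [List.cons_append, fibVal_cons, if_true, List.length_append,
        List.length_singleton, hlen']
      omega

lemma zeck_length_mono {i j : ℕ} (h : i ≤ j) : (zeck i).length ≤ (zeck j).length := by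
  rw [zeck, zeck, rep_length, rep_length]
  exact Nat.find_mono (fun t ht => lt_of_le_of_lt h ht)

lemma Lf_lt_Lf {i j : ℕ} (h : i < j) : Lf i < Lf j := by
  have hj : 1 ≤ j := by omega
  rcases lt_or_eq_of_le (zeck_length_mono (le_of_lt h)) with hlen | hlen
  · have h1 : Lf i < Nat.fib ((zeck i).length + 1 + 2) := by
      have := fibVal_lt (zeck i ++ [false]) (validFib_append_false (valid_zeck i))
      simpa [Lf] using this
    have h2 : Nat.fib ((zeck j).length + 2) ≤ Lf j := by
      have := fib_le_fibVal (w := zeck j ++ [false]) ?_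
      · simpa [Lf] using this
      · cases hz : zeck j with
        | nil => exact absurd hz (zeck_ne_nil hj)
        | cons a w' =>
            have : a = true := by
              have := zeck_head hj
              rw [hz] at this
              simpa using this
            subst this
            simp
    have h3 : Nat.fib ((zeck i).length + 1 + 2) ≤ Nat.fib ((zeck j).length + 2) :=
      Nat.fib_mono (by omega)
    omega
  · have := shift_lt_shift (zeck i) (zeck j) (valid_zeck i) (valid_zeck j) hlen
      (by rw [fibVal_zeck, fibVal_zeck]; exact h)
    exact this

lemma Lf_le_Lf {i j : ℕ} (h : i ≤ j) : Lf i ≤ Lf j := by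
  rcases lt_or_eq_of_le h with h | h
  · exact le_of_lt (Lf_lt_Lf h)
  · subst h; rfl

def par (j : ℕ) : ℕ := fibVal (zeck j).dropLast

lemma par_spec {j : ℕ} (hj : 1 ≤ j) :
    zeck (par j) = (zeck j).dropLast ∧
    j = Lf (par j) + (if lastZ j then 1 else 0) ∧
    (lastZ j = true → lastZ (par j) = false) := by
  have hne : zeck j ≠ [] := zeck_ne_nil hj
  set I := (zeck j).dropLast with hI
  have hbdef : lastZ j = (zeck j).getLast hne := by
    rw [lastZ, List.getLastD_eq_getLast?, List.getLast?_eq_getLast hne, Option.getD_some]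
  have hsplit : I ++ [lastZ j] = zeck j := by
    rw [hbdef, hI]
    exact List.dropLast_append_getLast hne
  have hvalid : ValidFib (zeck j) := valid_zeck j
  have hIvalid : ValidFib I := by
    unfold ValidFib List.Chain' at hvalid ⊢
    rw [← hsplit, List.isChain_append] at hvalid
    exact hvalid.1
  have hlastI : ∀ x ∈ I.getLast?, (lastZ j = true → x = false) := by
    intro x hx hb
    unfold ValidFib List.Chain' at hvalid
    rw [← hsplit, List.isChain_append] at hvalid
    have := hvalid.2.2 x hx (lastZ j) (by simp)
    rw [hb] at this
    simpa using this
  have hIhead : I = [] ∨ I.head? = some true := by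
    cases hIcase : I with
    | nil => left; rfl
    | cons a w' =>
        right
        have hhead : (zeck j).head? = some true := zeck_head hj
        rw [← hsplit, hIcase] at hhead
        simpa using hhead
  have hzp : zeck (par j) = I := by
    rw [par, ← hI]
    exact zeck_unique I hIvalid hIhead
  refine ⟨hzp, ?_, ?_⟩
  · have hLf : Lf (par j) = fibVal (I ++ [false]) := by rw [Lf, hzp]
    rw [hLf]
    conv_lhs => rw [← fibVal_zeck j, ← hsplit, fibVal_append_singleton]
  · intro hb
    rw [lastZ, hzp]
    cases hIcase : I with
    | nil => rfl
    | cons a w' =>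
        have := hlastI ((a :: w').getLast (by simp)) ?_ hb
        · rw [List.getLastD_eq_getLast?, List.getLast?_eq_getLast (by simp), Option.getD_some,
            this]
        · rw [hIcase, List.getLast?_eq_getLast (by simp)]
          simp

lemma par_L {y : ℕ} (hy : 1 ≤ y) : par (Lf y) = y := by
  rw [par, zeck_L hy, List.dropLast_concat, fibVal_zeck]

lemma par_L1 {y : ℕ} (hl : lastZ y = false) : par (Lf y + 1) = y := by
  rw [par, zeck_L1 hl, List.dropLast_concat, fibVal_zeck]

lemma zeck_one : zeck 1 = [true] := by
  have : fibVal [true] = 1 := by simp [fibVal]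
  rw [← this]
  exact zeck_unique [true] (List.isChain_singleton _) (Or.inr rfl)

lemma Lf_one : Lf 1 = 2 := by
  rw [Lf, zeck_one]
  simp [fibVal]
  decide

lemma Lf_pos {y : ℕ} (hy : 1 ≤ y) : 1 ≤ Lf y := by
  have := Lf_lt_Lf (show 0 < y from hy)
  rw [Lf_zero] at this
  omega

lemma Lf_succ_aux (i κ : ℕ) (hi : 1 ≤ i)
    (hκ : (lastZ i = true ∧ κ = 1) ∨ (lastZ i = false ∧ κ = 2)) :
    Lf (i + 1) = Lf i + κ := by
  have hmono : Lf i < Lf (i + 1) := Lf_lt_Lf (by omega)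
  have hge : Lf i + κ ≤ Lf (i + 1) := by
    rcases hκ with ⟨hl, hk⟩ | ⟨hl, hk⟩
    · omega
    · have hne : Lf (i + 1) ≠ Lf i + 1 := by
        intro heq
        have h1 : par (Lf i + 1) = i := par_L1 hl
        have h2 : par (Lf (i + 1)) = i + 1 := par_L (by omega)
        rw [heq, h1] at h2
        omega
      omega
  have hκle : κ ≤ 2 ∧ 1 ≤ κ := by rcases hκ with ⟨_, hk⟩ | ⟨_, hk⟩ <;> omega
  have hle : Lf (i + 1) ≤ Lf i + κ := by
    obtain ⟨j₀, hj₀⟩ : ∃ j₀, j₀ = Lf i + κ := ⟨_, rfl⟩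
    have hj₀1 : 1 ≤ j₀ := by
      have := Lf_pos hi
      omega
    obtain ⟨hzp, hdecomp, hblast⟩ := par_spec hj₀1
    have hdecomp' : j₀ = Lf (par j₀) ∨ (j₀ = Lf (par j₀) + 1 ∧ lastZ (par j₀) = false) := by
      cases hb : lastZ j₀ with
      | false => rw [hb] at hdecomp; simp at hdecomp; left; omega
      | true =>
          rw [hb] at hdecomp
          simp at hdecomp
          exact Or.inr ⟨hdecomp, hblast hb⟩
    have hpge : i + 1 ≤ par j₀ := by
      by_contra hcon
      push_neg at hcon
      rcases lt_or_eq_of_le (Nat.lt_succ_iff.mp hcon) with hlt | heq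
      · have h1 : Lf (par j₀) < Lf i := Lf_lt_Lf hlt
        rcases hdecomp' with h | ⟨h, _⟩ <;> omega
      · rw [heq] at hdecomp'
        rcases hdecomp' with h | ⟨h, hfl⟩
        · omega
        · have : κ = 1 := by omega
          rcases hκ with ⟨hl, hk⟩ | ⟨hl, hk⟩
          · simp [hl] at hfl
          · omega
    have := Lf_le_Lf hpge
    rcases hdecomp' with h | ⟨h, _⟩ <;> omega
  omega

lemma Lf_succ {i : ℕ} (hi : 1 ≤ i) :
    Lf (i + 1) = Lf i + (if lastZ i then 1 else 2) := by
  cases hl : lastZ i with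
  | false => simpa using Lf_succ_aux i 2 hi (Or.inr ⟨hl, rfl⟩)
  | true => simpa using Lf_succ_aux i 1 hi (Or.inl ⟨hl, rfl⟩)

end ZeckAux

namespace ZeckAux

section Machine

variable {σ Δ : Type} (M : DFAO Bool σ Δ) (n : ℕ)

abbrev A1 (σ : Type) (n : ℕ) : Type := Bool × σ × Bool × ZMod n × ZMod n

def c0 (x : A1 σ n) : A1 σ n :=
  (false, M.step x.2.1 false, false, x.2.2.2.2, x.2.2.2.2 + x.2.2.2.1)

def c1 (x : A1 σ n) : A1 σ n :=
  (false, M.step x.2.1 true, true, x.2.2.2.2 + 1, x.2.2.2.2 + x.2.2.2.1 + 2)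

def gamma1 (x : A1 σ n) : List (A1 σ n) :=
  if x.1 then [x, c1 M n x]
  else if x.2.2.1 then [c0 M n x]
  else [c0 M n x, c1 M n x]

lemma gamma1_ne_nil (x : A1 σ n) : gamma1 M n x ≠ [] := by
  rw [gamma1]
  split
  · simp
  · split <;> simp

lemma gamma1_len_le (x : A1 σ n) : (gamma1 M n x).length ≤ 2 := by
  rw [gamma1]
  split
  · simp
  · split <;> simp

def qstate (y : ℕ) : σ := (zeck y).foldl M.step M.start

def Wle (y : ℕ) : A1 σ n :=
  if y = 0 then (true, M.start, false, 0, 0)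
  else (false, qstate M y, lastZ y, (y : ZMod n), (Lf y : ZMod n))

lemma qstate_zero : qstate M 0 = M.start := by
  rw [qstate, zeck_zero]
  rfl

lemma qstate_L {y : ℕ} (hy : 1 ≤ y) :
    qstate M (Lf y) = M.step (qstate M y) false := by
  rw [qstate, qstate, zeck_L hy, List.foldl_append]
  rfl

lemma qstate_L1 {y : ℕ} (hl : lastZ y = false) :
    qstate M (Lf y + 1) = M.step (qstate M y) true := by
  rw [qstate, qstate, zeck_L1 hl, List.foldl_append]
  rfl

lemma lastZ_zero : lastZ 0 = false := by
  rw [lastZ, zeck_zero]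
  rfl

lemma Wle_zero : Wle M n 0 = (true, M.start, false, 0, 0) := by
  rw [Wle, if_pos rfl]

lemma Wle_one : Wle M n 1 = (false, M.step M.start true, true, 1, 2) := by
  rw [Wle, if_neg one_ne_zero]
  have h1 : qstate M 1 = M.step M.start true := by rw [qstate, zeck_one]; rfl
  have h2 : lastZ 1 = true := by rw [lastZ, zeck_one]; rfl
  rw [h1, h2, Lf_one]
  norm_num

lemma gamma1_W_zero : gamma1 M n (Wle M n 0) = [Wle M n 0, Wle M n 1] := by
  rw [Wle_zero, Wle_one, gamma1]
  simp [c1]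

lemma gamma1_W {y : ℕ} (hy : 1 ≤ y) :
    gamma1 M n (Wle M n y) =
      if lastZ y then [Wle M n (Lf y)] else [Wle M n (Lf y), Wle M n (Lf y + 1)] := by
  have hy0 : y ≠ 0 := by omega
  have hLpos : 1 ≤ Lf y := Lf_pos hy
  have hc0 : c0 M n (Wle M n y) = Wle M n (Lf y) := by
    rw [Wle, if_neg hy0, c0, Wle, if_neg (by omega)]
    simp only
    rw [qstate_L M hy, lastZ_L hy, Lf_LL y]
    push_cast
    ring_nf
  have hc1 : lastZ y = false → c1 M n (Wle M n y) = Wle M n (Lf y + 1) := by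
    intro hl
    rw [Wle, if_neg hy0, c1, Wle, if_neg (by omega)]
    simp only
    rw [qstate_L1 M hl, lastZ_L1 hl, Lf_LL1 hl]
    push_cast
    ring_nf
  have hfst : (Wle M n y).1 = false := by rw [Wle, if_neg hy0]
  have hsnd : (Wle M n y).2.2.1 = lastZ y := by rw [Wle, if_neg hy0]
  rw [gamma1, hfst, if_neg Bool.false_ne_true, hsnd]
  cases hl : lastZ y with
  | true => rw [if_pos rfl, hc0]; simp
  | false => rw [if_neg Bool.false_ne_true, hc0, hc1 hl]; simp

end Machine

end ZeckAux

namespace ZeckAux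

lemma list_eq_range_map {β : Type*} (l : List β) (dflt : β) (g : ℕ → β)
    (hg : ∀ j, j < l.length → l.getD j dflt = g j) :
    l = (List.range l.length).map g := by
  apply List.ext_getElem
  · simp
  · intro j h1 h2
    have := hg j h1
    rw [List.getD_eq_getElem l dflt h1] at this
    simpa using this

lemma range_flatMap_blocks {β : Type*} (G : ℕ → ℕ) (hmono : Monotone G) (f : ℕ → β) (a : ℕ) :
    ∀ m, ((List.range m).flatMap
        (fun j => (List.range (G (a+j+1) - G (a+j))).map (fun r => f (G (a+j) + r))))
      = (List.range (G (a+m) - G a)).map (fun r => f (G a + r))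
  | 0 => by simp
  | (m+1) => by
      rw [List.range_succ, List.flatMap_append, range_flatMap_blocks G hmono f a m,
        show a + (m+1) = a + m + 1 from by omega]
      have h2 : G a ≤ G (a + m) := hmono (by omega)
      have h3 : G (a + m) ≤ G (a + m + 1) := hmono (by omega)
      rw [show G (a + m + 1) - G a = (G (a + m) - G a) + (G (a + m + 1) - G (a + m)) from by omega,
        List.range_add, List.map_append]
      congr 1
      simp only [List.flatMap_cons, List.flatMap_nil, List.append_nil, List.map_map]
      apply List.map_congr_left
      intro r hr
      simp only [Function.comp_apply]
      congr 1
      omega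

section Machine2

variable {σ Δ : Type} (M : DFAO Bool σ Δ) (n : ℕ)

def ell1 : ℕ → ℕ
  | 0 => 0
  | (i+1) => ell1 i + (gamma1 M n (Wle M n i)).length

lemma ell1_mono : Monotone (ell1 M n) := by
  apply monotone_nat_of_le_succ
  intro i
  rw [ell1]
  omega

lemma ell1_eq {i : ℕ} (hi : 1 ≤ i) : ell1 M n i = Lf i := by
  induction i with
  | zero => omega
  | succ i ih =>
      rcases Nat.eq_zero_or_pos i with h0 | hpos
      · subst h0
        rw [ell1, ell1, gamma1_W_zero, Lf_one]
        rfl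
      · rw [ell1, ih hpos, gamma1_W M n hpos, Lf_succ hpos]
        cases hl : lastZ i <;> simp

lemma W_fp (i j : ℕ) (hj : j < (gamma1 M n (Wle M n i)).length) :
    Wle M n (ell1 M n i + j) = (gamma1 M n (Wle M n i)).getD j (Wle M n 0) := by
  rcases Nat.eq_zero_or_pos i with h0 | hpos
  · subst h0
    rw [gamma1_W_zero] at hj ⊢
    simp at hj
    show Wle M n (ell1 M n 0 + j) = _
    have : ell1 M n 0 = 0 := rfl
    rw [this]
    interval_cases j
    · rfl
    · rfl
  · rw [gamma1_W M n hpos] at hj ⊢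
    rw [ell1_eq M n hpos]
    cases hl : lastZ i with
    | true =>
        rw [hl] at hj
        simp at hj
        subst hj
        simp
    | false =>
        rw [hl] at hj
        simp at hj
        interval_cases j
        · simp
        · simp

def ghat : ℕ → A1 σ n → List (A1 σ n)
  | 0, x => [x]
  | (k+1), x => (gamma1 M n x).flatMap (ghat k)

def ellk : ℕ → ℕ → ℕ
  | 0, i => i
  | (k+1), i => ellk k (ell1 M n i)

lemma ellk_mono (k : ℕ) : Monotone (ellk M n k) := by
  induction k with
  | zero => exact monotone_id
  | succ k ih =>
      intro i j hij
      exact ih (ell1_mono M n hij)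

lemma gamma1_as_range (i : ℕ) :
    gamma1 M n (Wle M n i) =
      (List.range (ell1 M n (i+1) - ell1 M n i)).map (fun t => Wle M n (ell1 M n i + t)) := by
  have hlen : ell1 M n (i+1) - ell1 M n i = (gamma1 M n (Wle M n i)).length := by
    rw [ell1]
    omega
  rw [hlen]
  exact list_eq_range_map _ (Wle M n 0) _ (fun j hj => (W_fp M n i j hj).symm)

lemma block_lemma : ∀ (k i : ℕ), ghat M n k (Wle M n i) =
    (List.range (ellk M n k (i+1) - ellk M n k i)).map (fun r => Wle M n (ellk M n k i + r))
  | 0, i => by simp [ghat, ellk, List.range_succ]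
  | (k+1), i => by
      rw [ghat, gamma1_as_range, List.flatMap_map]
      have hfun : (fun t => ghat M n k (Wle M n (ell1 M n i + t))) =
          fun t => (List.range (ellk M n k (ell1 M n i + t + 1) - ellk M n k (ell1 M n i + t))).map
            (fun r => Wle M n (ellk M n k (ell1 M n i + t) + r)) := by
        funext t
        exact block_lemma k (ell1 M n i + t)
      rw [show ((List.range (ell1 M n (i+1) - ell1 M n i)).flatMap fun t => ghat M n k (Wle M n (ell1 M n i + t))) = ((List.range (ell1 M n (i+1) - ell1 M n i)).flatMap fun t => (List.range (ellk M n k (ell1 M n i + t + 1) - ellk M n k (ell1 M n i + t))).map (fun r => Wle M n (ellk M n k (ell1 M n i + t) + r))) from by rw [hfun],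
        range_flatMap_blocks (ellk M n k) (ellk_mono M n k) (Wle M n) (ell1 M n i)
          (ell1 M n (i+1) - ell1 M n i)]
      have hsum : ell1 M n i + (ell1 M n (i+1) - ell1 M n i) = ell1 M n (i+1) := by
        have := ell1_mono M n (show i ≤ i + 1 by omega)
        omega
      rw [hsum]
      rfl

end Machine2

end ZeckAux

namespace ZeckAux

section Marking

variable {σ Δ : Type} (M : DFAO Bool σ Δ) (n : ℕ) (cpar : ℕ) (K : ℕ)

def markedB : A1 σ n → Bool := fun x => decide (x.2.2.2.1 = (cpar : ZMod n))

lemma Wle_state (y : ℕ) : (Wle M n y).2.1 = qstate M y := by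
  rw [Wle]
  split
  · next h => subst h; rw [qstate_zero]
  · rfl

lemma Wle_vcomp (y : ℕ) : (Wle M n y).2.2.2.1 = (y : ZMod n) := by
  rw [Wle]
  split
  · next h => subst h; simp
  · rfl

lemma marked_W (hn : 1 ≤ n) (hc : cpar < n) (y : ℕ) :
    markedB (σ := σ) n cpar (Wle M n y) = decide (y % n = cpar) := by
  rw [markedB, Wle_vcomp]
  by_cases h : y % n = cpar
  · have h2 : (y : ZMod n) = (cpar : ZMod n) := by
      rw [ZMod.natCast_eq_natCast_iff]
      unfold Nat.ModEq
      rw [h, Nat.mod_eq_of_lt hc]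
    simp [h2, h]
  · have h2 : ¬ ((y : ZMod n) = (cpar : ZMod n)) := by
      rw [ZMod.natCast_eq_natCast_iff]
      unfold Nat.ModEq
      rw [Nat.mod_eq_of_lt hc]
      exact h
    simp [h2, h]

def cnt (a : A1 σ n) : ℕ := max 1 ((ghat M n K a).filter (markedB n cpar)).length

lemma cnt_pos (a : A1 σ n) : 1 ≤ cnt M n cpar K a := le_max_left _ _

def cntBelow (m : ℕ) : ℕ := ((List.range m).filter (fun y => decide (y % n = cpar))).length

lemma cntBelow_succ (m : ℕ) :
    cntBelow n cpar (m + 1) =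
      cntBelow n cpar m + (if m % n = cpar then 1 else 0) := by
  rw [cntBelow, cntBelow, List.range_succ, List.filter_append]
  simp only [List.length_append]
  split
  · next h => simp [h]
  · next h => simp [h]

lemma cntBelow_mono {m m' : ℕ} (h : m ≤ m') : cntBelow n cpar m ≤ cntBelow n cpar m' := by
  induction m' with
  | zero =>
      have : m = 0 := by omega
      subst this
      exact le_refl _
  | succ m' ih =>
      rcases Nat.lt_or_ge m (m' + 1) with h1 | h1
      · have := ih (by omega)
        rw [cntBelow_succ]
        omega
      · have : m = m' + 1 := by omega
        subst this
        exact le_refl _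

lemma cntBelow_invariant (hn : 1 ≤ n) (hc : cpar < n) (m : ℕ) :
    m ≤ n * cntBelow n cpar m + cpar ∧ n * cntBelow n cpar m + cpar < m + n := by
  induction m with
  | zero => simp [cntBelow]; omega
  | succ m ih =>
      rw [cntBelow_succ]
      by_cases h : m % n = cpar
      · rw [if_pos h]
        have hd : (n * cntBelow n cpar m + cpar) % n = m % n := by
          rw [Nat.add_comm, Nat.add_mul_mod_self_left, Nat.mod_eq_of_lt hc, h]
        have hcong : m ≡ n * cntBelow n cpar m + cpar [MOD n] := by
          unfold Nat.ModEq
          rw [hd]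
        have hdvd := (Nat.modEq_iff_dvd' ih.1).mp hcong
        have hlt : n * cntBelow n cpar m + cpar - m < n := by omega
        have hz := Nat.eq_zero_of_dvd_of_lt hdvd hlt
        have heq : m = n * cntBelow n cpar m + cpar := by omega
        rw [Nat.mul_add, Nat.mul_one]
        omega
      · rw [if_neg h]
        have hne : n * cntBelow n cpar m + cpar ≠ m := by
          intro hcon
          apply h
          rw [← hcon, Nat.add_comm, Nat.add_mul_mod_self_left, Nat.mod_eq_of_lt hc]
        simp only [Nat.add_zero]
        omega

lemma cntBelow_hit (hn : 1 ≤ n) (hc : cpar < n) {m : ℕ} (h : m % n = cpar) :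
    m = n * cntBelow n cpar m + cpar := by
  obtain ⟨h1, h2⟩ := cntBelow_invariant n cpar hn hc m
  have hd : (n * cntBelow n cpar m + cpar) % n = m % n := by
    rw [Nat.add_comm, Nat.add_mul_mod_self_left, Nat.mod_eq_of_lt hc, h]
  have hcong : m ≡ n * cntBelow n cpar m + cpar [MOD n] := by
    unfold Nat.ModEq
    rw [hd]
  have hdvd := (Nat.modEq_iff_dvd' h1).mp hcong
  have hlt : n * cntBelow n cpar m + cpar - m < n := by omega
  have hz := Nat.eq_zero_of_dvd_of_lt hdvd hlt
  omega

lemma range_filter_marked (hn : 1 ≤ n) (hc : cpar < n) (m : ℕ) :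
    (List.range m).filter (fun y => decide (y % n = cpar)) =
      (List.range (cntBelow n cpar m)).map (fun t => n * t + cpar) := by
  induction m with
  | zero => rfl
  | succ m ih =>
      rw [List.range_succ, List.filter_append, ih, cntBelow_succ]
      by_cases h : m % n = cpar
      · rw [if_pos h, List.range_succ, List.map_append]
        congr 1
        have := cntBelow_hit n cpar hn hc h
        simp [h]
        omega
      · rw [if_neg h]
        simp [h]

lemma cntBelow_add_ge_two (hn : 1 ≤ n) (hc : cpar < n) (s len : ℕ) (hlen : 2 * n ≤ len) :
    cntBelow n cpar s + 2 ≤ cntBelow n cpar (s + len) := by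
  obtain ⟨h1, h2⟩ := cntBelow_invariant n cpar hn hc s
  obtain ⟨h3, h4⟩ := cntBelow_invariant n cpar hn hc (s + len)
  -- n * (cntBelow s + 1) + cpar < s + 2n ≤ s + len ≤ n * cntBelow (s+len) + cpar
  have := cntBelow_mono n cpar (show s ≤ s + len by omega)
  nlinarith

end Marking

end ZeckAux

namespace ZeckAux

section Bounds

variable {σ Δ : Type} (M : DFAO Bool σ Δ) (n : ℕ) (cpar : ℕ) (K : ℕ)

end Bounds

def trueClass {σ : Type} {n : ℕ} (a : A1 σ n) : Prop := a.1 = false ∧ a.2.2.1 = true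

lemma sigma_mk_eq {α : Type*} {β : α → Type*} {a a' : α} {x : β a} {y : β a'}
    (h : a = a') (hxy : HEq x y) : (⟨a, x⟩ : Sigma β) = ⟨a', y⟩ := by
  subst h
  rw [eq_of_heq hxy]

section Bounds

variable {σ Δ : Type} (M : DFAO Bool σ Δ) (n : ℕ) (cpar : ℕ) (K : ℕ)

lemma ghat_len_bounds : ∀ (k : ℕ) (a : A1 σ n),
    ((ghat M n k a).length ≤ Nat.fib (k+3)) ∧
    (trueClass a → (ghat M n k a).length ≤ Nat.fib (k+2)) ∧
    (Nat.fib (k+1) ≤ (ghat M n k a).length) ∧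
    (¬ trueClass a → Nat.fib (k+2) ≤ (ghat M n k a).length) := by
  intro k
  induction k with
  | zero =>
      intro a
      have h : (ghat M n 0 a).length = 1 := rfl
      exact ⟨by rw [h]; decide, fun _ => by rw [h]; decide, by rw [h]; decide,
        fun _ => by rw [h]; decide⟩
  | succ k ih =>
      intro a
      have hfib4 : Nat.fib (k+4) = Nat.fib (k+2) + Nat.fib (k+3) := fib_succ_succ (k+2)
      have hfib3 : Nat.fib (k+3) = Nat.fib (k+1) + Nat.fib (k+2) := fib_succ_succ (k+1)
      have hmono12 : Nat.fib (k+1) ≤ Nat.fib (k+2) := Nat.fib_mono (by omega)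
      have hmono23 : Nat.fib (k+2) ≤ Nat.fib (k+3) := Nat.fib_mono (by omega)
      have hc0 : ¬ trueClass (c0 M n a) := by
        rw [trueClass, c0]
        simp
      have hc1 : trueClass (c1 M n a) := by
        rw [trueClass, c1]
        exact ⟨rfl, rfl⟩
      simp only [show k+1+3 = k+4 from by omega, show k+1+2 = k+3 from by omega,
        show k+1+1 = k+2 from by omega]
      have hlen : (ghat M n (k+1) a).length = ((gamma1 M n a).map (fun x => (ghat M n k x).length)).sum := by
        rw [ghat, List.length_flatMap]
      by_cases hroot : a.1 = true
      · have hg : gamma1 M n a = [a, c1 M n a] := by rw [gamma1, if_pos hroot]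
        rw [hlen, hg]
        simp only [List.map_cons, List.map_nil, List.sum_cons, List.sum_nil, Nat.add_zero]
        have hA := ih a
        have hB := ih (c1 M n a)
        have hAnt : ¬ trueClass a := by rw [trueClass]; intro hcon; rw [hroot] at hcon; simp at hcon
        refine ⟨?_, ?_, ?_, ?_⟩
        · have := hA.1
          have := hB.2.1 hc1
          omega
        · intro hcon
          exact absurd hcon hAnt
        · have := hA.2.2.2 hAnt
          have := hB.2.2.1
          omega
        · intro _
          have := hA.2.2.2 hAnt
          have := hB.2.2.1
          omega
      · have hroot' : a.1 = false := by revert hroot; cases a.1 <;> simp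
        by_cases hl : a.2.2.1 = true
        · have hg : gamma1 M n a = [c0 M n a] := by
            rw [gamma1, if_neg (by rw [hroot']; exact Bool.false_ne_true), if_pos hl]
          rw [hlen, hg]
          simp only [List.map_cons, List.map_nil, List.sum_cons, List.sum_nil, Nat.add_zero]
          have hB := ih (c0 M n a)
          refine ⟨?_, ?_, ?_, ?_⟩
          · have := hB.1
            omega
          · intro _
            exact hB.1
          · have := hB.2.2.2 hc0
            omega
          · intro hcon
            exfalso
            exact hcon ⟨hroot', hl⟩
        · have hl' : a.2.2.1 = false := by revert hl; cases a.2.2.1 <;> simp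
          have hg : gamma1 M n a = [c0 M n a, c1 M n a] := by
            rw [gamma1, if_neg (by rw [hroot']; exact Bool.false_ne_true),
              if_neg (by rw [hl']; exact Bool.false_ne_true)]
          rw [hlen, hg]
          simp only [List.map_cons, List.map_nil, List.sum_cons, List.sum_nil, Nat.add_zero]
          have hA := ih (c0 M n a)
          have hB := ih (c1 M n a)
          refine ⟨?_, ?_, ?_, ?_⟩
          · have := hA.1
            have := hB.2.1 hc1
            omega
          · intro hcon
            exact absurd hcon.2 (by rw [hl']; exact Bool.false_ne_true)
          · have := hA.2.2.2 hc0
            have := hB.2.2.1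
            omega
          · intro _
            have := hA.2.2.2 hc0
            have := hB.2.2.1
            omega

lemma ghat_len_le (k : ℕ) (a : A1 σ n) : (ghat M n k a).length ≤ Nat.fib (k+3) :=
  (ghat_len_bounds M n k a).1

lemma ghat_len_ge (k : ℕ) (a : A1 σ n) : Nat.fib (k+1) ≤ (ghat M n k a).length :=
  (ghat_len_bounds M n k a).2.2.1

lemma ellk_zero (k : ℕ) : ellk M n k 0 = 0 := by
  induction k with
  | zero => rfl
  | succ k ih =>
      rw [ellk]
      have : ell1 M n 0 = 0 := rfl
      rw [this, ih]

lemma ellk_len (k i : ℕ) :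
    ellk M n k (i+1) - ellk M n k i = (ghat M n k (Wle M n i)).length := by
  rw [block_lemma]
  simp

lemma ellk_le (k i : ℕ) : ellk M n k i ≤ ellk M n k (i+1) :=
  ellk_mono M n k (by omega)

end Bounds

section Counting

variable {σ Δ : Type} (M : DFAO Bool σ Δ) (n : ℕ) (cpar : ℕ) (K : ℕ)

lemma global_filter_marked (hn : 1 ≤ n) (hc : cpar < n) (m : ℕ) :
    ((List.range m).map (Wle M n)).filter (markedB n cpar) =
      (List.range (cntBelow n cpar m)).map (fun t => Wle M n (n * t + cpar)) := by
  rw [List.filter_map]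
  have h1 : (markedB n cpar ∘ Wle M n) = (fun y => decide (y % n = cpar)) := by
    funext y
    exact marked_W M n cpar hn hc y
  rw [h1, range_filter_marked n cpar hn hc, List.map_map]
  rfl

lemma filter_marked_segment (hn : 1 ≤ n) (hc : cpar < n) (s len : ℕ) :
    ((List.range len).map (fun r => Wle M n (s + r))).filter (markedB n cpar) =
      (List.range (cntBelow n cpar (s + len) - cntBelow n cpar s)).map
        (fun t => Wle M n (n * (cntBelow n cpar s + t) + cpar)) := by
  have hsplit : (List.range (s+len)).map (Wle M n) =
      (List.range s).map (Wle M n) ++ (List.range len).map (fun r => Wle M n (s + r)) := by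
    rw [List.range_add, List.map_append, List.map_map]
    rfl
  have hcb : cntBelow n cpar (s + len) =
      cntBelow n cpar s + (cntBelow n cpar (s + len) - cntBelow n cpar s) := by
    have := cntBelow_mono n cpar (show s ≤ s + len by omega)
    omega
  have h1 := global_filter_marked M n cpar hn hc (s + len)
  rw [hsplit, List.filter_append, global_filter_marked M n cpar hn hc s] at h1
  rw [hcb, List.range_add, List.map_append] at h1
  have h2 := List.append_cancel_left h1
  rw [h2, List.map_map]
  rfl

lemma cnt_W_eq (hn : 1 ≤ n) (hc : cpar < n) (hK : 2 * n ≤ Nat.fib (K+1)) (i : ℕ) :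
    cnt M n cpar K (Wle M n i) =
      cntBelow n cpar (ellk M n K (i+1)) - cntBelow n cpar (ellk M n K i) ∧
    2 ≤ cnt M n cpar K (Wle M n i) := by
  have hlen : ellk M n K (i+1) = ellk M n K i + (ghat M n K (Wle M n i)).length := by
    have := ellk_len M n K i
    have := ellk_le M n K i
    omega
  have hfilter := filter_marked_segment M n cpar hn hc (ellk M n K i) ((ghat M n K (Wle M n i)).length)
  have hblock := block_lemma M n K i
  have hge2 : cntBelow n cpar (ellk M n K i) + 2 ≤
      cntBelow n cpar (ellk M n K i + (ghat M n K (Wle M n i)).length) := by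
    apply cntBelow_add_ge_two n cpar hn hc
    calc 2 * n ≤ Nat.fib (K+1) := hK
      _ ≤ (ghat M n K (Wle M n i)).length := ghat_len_ge M n K _
  have hflen : ((ghat M n K (Wle M n i)).filter (markedB n cpar)).length =
      cntBelow n cpar (ellk M n K (i+1)) - cntBelow n cpar (ellk M n K i) := by
    conv_lhs => rw [hblock, ellk_len M n K i]
    rw [hfilter, hlen]
    simp
  constructor
  · rw [cnt, hflen]
    rw [hlen]
    omega
  · rw [cnt, hflen, hlen]
    omega

def sigW : ℕ → ℕ
  | 0 => 0
  | (i+1) => sigW i + cnt M n cpar K (Wle M n i)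

lemma sigW_succ (i : ℕ) :
    sigW M n cpar K (i+1) = sigW M n cpar K i + cnt M n cpar K (Wle M n i) := rfl

lemma sigW_lt_succ (i : ℕ) : sigW M n cpar K i < sigW M n cpar K (i+1) := by
  rw [sigW_succ]
  have := cnt_pos M n cpar K (Wle M n i)
  omega

lemma sigW_mono {i j : ℕ} (h : i ≤ j) : sigW M n cpar K i ≤ sigW M n cpar K j := by
  induction j with
  | zero =>
      have : i = 0 := by omega
      subst this; exact le_refl _
  | succ j ih =>
      rcases Nat.lt_or_ge i (j+1) with h1 | h1
      · have := ih (by omega)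
        have := sigW_lt_succ M n cpar K j
        omega
      · have : i = j + 1 := by omega
        subst this; exact le_refl _

lemma self_le_sigW (i : ℕ) : i ≤ sigW M n cpar K i := by
  induction i with
  | zero => exact le_refl _
  | succ i ih =>
      have := sigW_lt_succ M n cpar K i
      omega

lemma sigW_eq_cntBelow (hn : 1 ≤ n) (hc : cpar < n) (hK : 2 * n ≤ Nat.fib (K+1)) :
    ∀ i, sigW M n cpar K i = cntBelow n cpar (ellk M n K i) := by
  intro i
  induction i with
  | zero =>
      rw [ellk_zero]
      rfl
  | succ i ih =>
      rw [sigW_succ, ih, (cnt_W_eq M n cpar K hn hc hK i).1]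
      have : cntBelow n cpar (ellk M n K i) ≤ cntBelow n cpar (ellk M n K (i+1)) :=
        cntBelow_mono n cpar (ellk_le M n K i)
      omega

def idxp (p : ℕ) : ℕ := Nat.findGreatest (fun i => sigW M n cpar K i ≤ p) (p+1)

lemma sigW_idxp_le (p : ℕ) : sigW M n cpar K (idxp M n cpar K p) ≤ p := by
  have := Nat.findGreatest_spec (P := fun i => sigW M n cpar K i ≤ p)
    (m := 0) (n := p+1) (by omega)
    (by show sigW M n cpar K 0 ≤ p; rw [show sigW M n cpar K 0 = 0 from rfl]; omega)
  exact this

lemma idxp_le (p : ℕ) : idxp M n cpar K p ≤ p := by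
  have h1 := sigW_idxp_le M n cpar K p
  have h2 := self_le_sigW M n cpar K (idxp M n cpar K p)
  omega

lemma lt_sigW_idxp_succ (p : ℕ) : p < sigW M n cpar K (idxp M n cpar K p + 1) := by
  by_contra hcon
  push_neg at hcon
  have h1 : idxp M n cpar K p + 1 ≤ p + 1 := by
    have := idxp_le M n cpar K p
    omega
  have := Nat.findGreatest_is_greatest (P := fun i => sigW M n cpar K i ≤ p)
    (k := idxp M n cpar K p + 1) (n := p + 1) (by rw [idxp]; omega) h1
  exact this hcon

lemma idxp_eq (i j : ℕ) (hj : j < cnt M n cpar K (Wle M n i)) :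
    idxp M n cpar K (sigW M n cpar K i + j) = i := by
  set p := sigW M n cpar K i + j with hp
  have h1 : sigW M n cpar K i ≤ p := by omega
  have h2 : p < sigW M n cpar K (i+1) := by
    rw [sigW_succ]
    omega
  have hge : i ≤ idxp M n cpar K p := by
    apply Nat.le_findGreatest
    · have := self_le_sigW M n cpar K i
      omega
    · exact h1
  have hle : idxp M n cpar K p ≤ i := by
    by_contra hcon
    push_neg at hcon
    have : sigW M n cpar K (i+1) ≤ sigW M n cpar K (idxp M n cpar K p) :=
      sigW_mono M n cpar K (by omega)
    have := sigW_idxp_le M n cpar K p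
    omega
  omega

abbrev BT : Type := Σ a : A1 σ n, Fin (cnt M n cpar K a)

def Wp (p : ℕ) : BT M n cpar K :=
  ⟨Wle M n (idxp M n cpar K p),
    ⟨p - sigW M n cpar K (idxp M n cpar K p), by
      have h1 := sigW_idxp_le M n cpar K p
      have h2 := lt_sigW_idxp_succ M n cpar K p
      rw [sigW_succ] at h2
      omega⟩⟩

lemma Wp_at (i j : ℕ) (hj : j < cnt M n cpar K (Wle M n i)) :
    Wp M n cpar K (sigW M n cpar K i + j) = ⟨Wle M n i, ⟨j, hj⟩⟩ := by
  have h1 := idxp_eq M n cpar K i j hj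
  rw [Wp]
  have h2 : sigW M n cpar K i + j - sigW M n cpar K (idxp M n cpar K (sigW M n cpar K i + j)) = j := by
    rw [h1]
    omega
  exact sigma_mk_eq (congrArg (Wle M n) h1) ((Fin.heq_ext_iff (by rw [h1])).mpr h2)

end Counting

end ZeckAux

namespace ZeckAux

lemma len_le_sum : ∀ (l : List ℕ), (∀ x ∈ l, 1 ≤ x) → l.length ≤ l.sum
  | [], _ => le_refl _
  | (x :: l), h => by
      have := len_le_sum l (fun y hy => h y (by simp [hy]))
      have hx := h x (by simp)
      simp only [List.length_cons, List.sum_cons]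
      omega

lemma sum_le_mul : ∀ (l : List ℕ) (cbound : ℕ), (∀ x ∈ l, x ≤ cbound) → l.sum ≤ l.length * cbound
  | [], _, _ => Nat.zero_le _
  | (x :: l), cbound, h => by
      have := sum_le_mul l cbound (fun y hy => h y (by simp [hy]))
      have hx := h x (by simp)
      simp only [List.length_cons, List.sum_cons]
      calc x + l.sum ≤ cbound + l.length * cbound := by omega
        _ = (l.length + 1) * cbound := by ring

lemma getD_map_range {β : Type*} (L t : ℕ) (f : ℕ → β) (d : β) (ht : t < L) :
    ((List.range L).map f).getD t d = f t := by
  rw [List.getD_eq_getElem _ _ (by simpa using ht)]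
  simp

section ChunkDef

variable {σ Δ : Type} (M : DFAO Bool σ Δ) (n : ℕ) (cpar : ℕ) (K : ℕ)

def grp (a : A1 σ n) : List (BT M n cpar K) :=
  (List.finRange (cnt M n cpar K a)).map (fun j => ⟨a, j⟩)

lemma length_grp (a : A1 σ n) : (grp M n cpar K a).length = cnt M n cpar K a := by
  rw [grp]
  simp

def Gex (a : A1 σ n) : List (BT M n cpar K) := (ghat M n K a).flatMap (grp M n cpar K)

lemma cnt_le_Gex_len (a : A1 σ n) : cnt M n cpar K a ≤ (Gex M n cpar K a).length := by
  rw [Gex, List.length_flatMap]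
  have h1 : (ghat M n K a).length ≤ ((ghat M n K a).map (fun x => (grp M n cpar K x).length)).sum := by
    have := len_le_sum ((ghat M n K a).map (fun x => (grp M n cpar K x).length)) ?_
    · simpa using this
    · intro x hx
      simp only [List.mem_map] at hx
      obtain ⟨y, _, hy⟩ := hx
      rw [← hy, length_grp]
      exact cnt_pos M n cpar K y
  have h2 : cnt M n cpar K a ≤ (ghat M n K a).length := by
    rw [cnt]
    have := List.length_filter_le (markedB n cpar) (ghat M n K a)
    have h3 : 1 ≤ (ghat M n K a).length := by
      have := ghat_len_ge M n K a
      have := Nat.fib_pos.mpr (show 0 < K + 1 by omega)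
      omega
    omega
  calc cnt M n cpar K a ≤ (ghat M n K a).length := h2
    _ ≤ _ := h1
  -- ...

lemma Gex_len_pos (a : A1 σ n) : 1 ≤ (Gex M n cpar K a).length :=
  le_trans (cnt_pos M n cpar K a) (cnt_le_Gex_len M n cpar K a)

def Gam (b : BT M n cpar K) : List (BT M n cpar K) :=
  if b.2.val = 0 then
    (Gex M n cpar K b.1).take ((Gex M n cpar K b.1).length + 1 - cnt M n cpar K b.1)
  else
    [(Gex M n cpar K b.1).getD ((Gex M n cpar K b.1).length - cnt M n cpar K b.1 + b.2.val) b]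

lemma Gam_ne_nil (b : BT M n cpar K) : Gam M n cpar K b ≠ [] := by
  rw [Gam]
  split
  · have h1 := Gex_len_pos M n cpar K b.1
    have h2 := cnt_le_Gex_len M n cpar K b.1
    apply List.length_pos_iff.mp
    rw [List.length_take]
    omega
  · simp

lemma Gam_length (b : BT M n cpar K) :
    (Gam M n cpar K b).length =
      if b.2.val = 0 then (Gex M n cpar K b.1).length + 1 - cnt M n cpar K b.1 else 1 := by
  rw [Gam]
  split
  · next h =>
      rw [List.length_take]
      have := cnt_le_Gex_len M n cpar K b.1
      omega
  · next h =>
      rfl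

lemma Gam_getD (b : BT M n cpar K) (q : ℕ) (hq : q < (Gam M n cpar K b).length) (d : BT M n cpar K) :
    (Gam M n cpar K b).getD q d =
      (Gex M n cpar K b.1).getD
        ((if b.2.val = 0 then 0 else (Gex M n cpar K b.1).length - cnt M n cpar K b.1 + b.2.val) + q)
        b := by
  rw [Gam_length] at hq
  rw [Gam]
  split
  · next h =>
      rw [if_pos h] at hq
      have hcnt := cnt_pos M n cpar K b.1
      have hle := cnt_le_Gex_len M n cpar K b.1
      have hq2 : q < (Gex M n cpar K b.1).length := by omega
      rw [Nat.zero_add, List.getD_eq_getElem _ d (by rw [List.length_take]; omega),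
        List.getD_eq_getElem _ b hq2, List.getElem_take]
  · next h =>
      rw [if_neg h] at hq
      have hq0 : q = 0 := by omega
      subst hq0
      simp

end ChunkDef

section ChunkW

variable {σ Δ : Type} (M : DFAO Bool σ Δ) (n : ℕ) (cpar : ℕ) (K : ℕ)

lemma grp_W (i : ℕ) :
    grp M n cpar K (Wle M n i) =
      (List.range (sigW M n cpar K (i+1) - sigW M n cpar K i)).map
        (fun t => Wp M n cpar K (sigW M n cpar K i + t)) := by
  have hdiff : sigW M n cpar K (i+1) - sigW M n cpar K i = cnt M n cpar K (Wle M n i) := by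
    rw [sigW_succ]
    omega
  rw [hdiff]
  apply List.ext_getElem
  · rw [length_grp]
    simp
  · intro j h1 h2
    simp only [grp] at h1 ⊢
    simp only [List.length_map, List.length_finRange] at h1
    have hWp := Wp_at M n cpar K i j h1
    simp only [List.getElem_map, List.getElem_finRange, List.getElem_range]
    rw [hWp]
    rfl

lemma Gex_W (i : ℕ) :
    Gex M n cpar K (Wle M n i) =
      (List.range (sigW M n cpar K (ellk M n K (i+1)) - sigW M n cpar K (ellk M n K i))).map
        (fun t => Wp M n cpar K (sigW M n cpar K (ellk M n K i) + t)) := by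
  have hlen : ellk M n K (i+1) = ellk M n K i + (ghat M n K (Wle M n i)).length := by
    have := ellk_len M n K i
    have := ellk_le M n K i
    omega
  rw [Gex]
  conv_lhs => rw [block_lemma M n K i, ellk_len M n K i]
  rw [List.flatMap_map]
  have hfun : (fun r => grp M n cpar K (Wle M n (ellk M n K i + r))) =
      fun r => (List.range (sigW M n cpar K (ellk M n K i + r + 1) - sigW M n cpar K (ellk M n K i + r))).map
        (fun t => Wp M n cpar K (sigW M n cpar K (ellk M n K i + r) + t)) := by
    funext r
    exact grp_W M n cpar K (ellk M n K i + r)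
  rw [show ((List.range ((ghat M n K (Wle M n i)).length)).flatMap
      fun r => grp M n cpar K (Wle M n (ellk M n K i + r))) =
      ((List.range ((ghat M n K (Wle M n i)).length)).flatMap
      fun r => (List.range (sigW M n cpar K (ellk M n K i + r + 1) - sigW M n cpar K (ellk M n K i + r))).map
        (fun t => Wp M n cpar K (sigW M n cpar K (ellk M n K i + r) + t))) from by rw [hfun]]
  rw [range_flatMap_blocks (sigW M n cpar K) (fun i j h => sigW_mono M n cpar K h)
    (Wp M n cpar K) (ellk M n K i) ((ghat M n K (Wle M n i)).length)]
  rw [← hlen]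

lemma Gex_W_len (i : ℕ) :
    (Gex M n cpar K (Wle M n i)).length =
      sigW M n cpar K (ellk M n K (i+1)) - sigW M n cpar K (ellk M n K i) := by
  rw [Gex_W]
  simp

lemma Gex_W_getD (i t : ℕ) (ht : t < (Gex M n cpar K (Wle M n i)).length) (d : BT M n cpar K) :
    (Gex M n cpar K (Wle M n i)).getD t d =
      Wp M n cpar K (sigW M n cpar K (ellk M n K i) + t) := by
  rw [Gex_W_len] at ht
  rw [Gex_W]
  exact getD_map_range _ _ _ _ ht

end ChunkW

end ZeckAux

namespace ZeckAux

section FP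

variable {σ Δ : Type} (M : DFAO Bool σ Δ) (n : ℕ) (cpar : ℕ) (K : ℕ)

def offp (p : ℕ) : ℕ := p - sigW M n cpar K (idxp M n cpar K p)

lemma decode_spec (p : ℕ) :
    sigW M n cpar K (idxp M n cpar K p) + offp M n cpar K p = p ∧
    offp M n cpar K p < cnt M n cpar K (Wle M n (idxp M n cpar K p)) := by
  have h1 := sigW_idxp_le M n cpar K p
  have h2 := lt_sigW_idxp_succ M n cpar K p
  rw [sigW_succ] at h2
  constructor
  · rw [offp]
    omega
  · rw [offp]
    omega

lemma Wp_def (p : ℕ) :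
    Wp M n cpar K p = ⟨Wle M n (idxp M n cpar K p),
      ⟨offp M n cpar K p, (decode_spec M n cpar K p).2⟩⟩ := rfl

lemma cnt_le_ghat_len (a : A1 σ n) : cnt M n cpar K a ≤ (ghat M n K a).length := by
  rw [cnt]
  have := List.length_filter_le (markedB n cpar) (ghat M n K a)
  have h3 : 1 ≤ (ghat M n K a).length := by
    have := ghat_len_ge M n K a
    have := Nat.fib_pos.mpr (show 0 < K + 1 by omega)
    omega
  omega

lemma sigW_diff_ge (hn : 1 ≤ n) (hc : cpar < n) (hK : 2 * n ≤ Nat.fib (K+1)) :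
    ∀ (len s : ℕ), sigW M n cpar K s + 2 * len ≤ sigW M n cpar K (s + len)
  | 0, s => by simp
  | (len+1), s => by
      have ih := sigW_diff_ge hn hc hK len s
      have h2 := (cnt_W_eq M n cpar K hn hc hK (s + len)).2
      have := sigW_succ M n cpar K (s + len)
      have he : s + (len + 1) = (s + len) + 1 := by omega
      rw [he]
      omega

lemma S_ge (hn : 1 ≤ n) (hc : cpar < n) (hK : 2 * n ≤ Nat.fib (K+1)) (i : ℕ) :
    cnt M n cpar K (Wle M n i) + 1 ≤ (Gex M n cpar K (Wle M n i)).length := by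
  rw [Gex_W_len]
  have hlen : ellk M n K (i+1) = ellk M n K i + (ghat M n K (Wle M n i)).length := by
    have := ellk_len M n K i
    have := ellk_le M n K i
    omega
  have hcl := cnt_le_ghat_len M n cpar K (Wle M n i)
  have h1 : 1 ≤ (ghat M n K (Wle M n i)).length := by
    have := ghat_len_ge M n K (Wle M n i)
    have := Nat.fib_pos.mpr (show 0 < K + 1 by omega)
    omega
  have := sigW_diff_ge M n cpar K hn hc hK ((ghat M n K (Wle M n i)).length) (ellk M n K i)
  rw [hlen]
  omega

def ellp : ℕ → ℕ
  | 0 => 0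
  | (p+1) => ellp p + (Gam M n cpar K (Wp M n cpar K p)).length

def stt (a : A1 σ n) (j : ℕ) : ℕ :=
  if j = 0 then 0 else (Gex M n cpar K a).length - cnt M n cpar K a + j

lemma stt_zero (a : A1 σ n) : stt M n cpar K a 0 = 0 := if_pos rfl

lemma stt_pos (a : A1 σ n) {j : ℕ} (hj : ¬ j = 0) :
    stt M n cpar K a j = (Gex M n cpar K a).length - cnt M n cpar K a + j := if_neg hj

lemma idxp_zero : idxp M n cpar K 0 = 0 := by
  have h := idxp_eq M n cpar K 0 0 (cnt_pos M n cpar K (Wle M n 0))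
  have h0 : sigW M n cpar K 0 + 0 = 0 := rfl
  rw [h0] at h
  exact h

lemma ellp_closed (hn : 1 ≤ n) (hc : cpar < n) (hK : 2 * n ≤ Nat.fib (K+1)) :
    ∀ p, ellp M n cpar K p =
      sigW M n cpar K (ellk M n K (idxp M n cpar K p)) +
        stt M n cpar K (Wle M n (idxp M n cpar K p)) (offp M n cpar K p) := by
  intro p
  induction p with
  | zero =>
      have hoff0 : offp M n cpar K 0 = 0 := by
        rw [offp, idxp_zero]
        have h0 : sigW M n cpar K 0 = 0 := rfl
        omega
      rw [ellp, idxp_zero, ellk_zero, hoff0, stt_zero]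
      rfl
  | succ p ih =>
      obtain ⟨hpd, hpj⟩ := decode_spec M n cpar K p
      set i := idxp M n cpar K p with hi
      set j := offp M n cpar K p with hj
      have hGlen : (Gam M n cpar K (Wp M n cpar K p)).length =
          if j = 0 then (Gex M n cpar K (Wle M n i)).length + 1 - cnt M n cpar K (Wle M n i)
          else 1 := by
        rw [Gam_length, Wp_def]
      have hcnt2 := (cnt_W_eq M n cpar K hn hc hK i).2
      have hSge := S_ge M n cpar K hn hc hK i
      have hle := cnt_le_Gex_len M n cpar K (Wle M n i)
      rw [ellp, ih, hGlen]
      rcases Nat.lt_or_ge (j + 1) (cnt M n cpar K (Wle M n i)) with hlt | hge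
      · have hidx : idxp M n cpar K (p+1) = i := by
          have := idxp_eq M n cpar K i (j+1) hlt
          rw [show sigW M n cpar K i + (j+1) = p + 1 from by omega] at this
          exact this
        have hoff : offp M n cpar K (p+1) = j + 1 := by
          rw [offp, hidx]
          omega
        rw [hidx, hoff]
        by_cases hj0 : j = 0
        · rw [hj0, stt_zero, stt_pos M n cpar K _ (show ¬(0+1 = 0) by omega), if_pos rfl]
          omega
        · rw [stt_pos M n cpar K _ hj0, stt_pos M n cpar K _ (show ¬(j+1 = 0) by omega),
            if_neg hj0]
          omega
      · have hcnteq : j + 1 = cnt M n cpar K (Wle M n i) := by omega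
        have hidx : idxp M n cpar K (p+1) = i + 1 := by
          have := idxp_eq M n cpar K (i+1) 0 (cnt_pos M n cpar K (Wle M n (i+1)))
          rw [show sigW M n cpar K (i+1) + 0 = p + 1 from by rw [sigW_succ]; omega] at this
          exact this
        have hoff : offp M n cpar K (p+1) = 0 := by
          rw [offp, hidx]
          rw [show sigW M n cpar K (i+1) = p + 1 from by rw [sigW_succ]; omega]
          omega
        rw [hidx, hoff, stt_zero]
        have hS : sigW M n cpar K (ellk M n K i) + (Gex M n cpar K (Wle M n i)).length =
            sigW M n cpar K (ellk M n K (i+1)) := by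
          rw [Gex_W_len]
          have : sigW M n cpar K (ellk M n K i) ≤ sigW M n cpar K (ellk M n K (i+1)) :=
            sigW_mono M n cpar K (ellk_le M n K i)
          omega
        by_cases hj0 : j = 0
        · omega
        · rw [stt_pos M n cpar K _ hj0, if_neg hj0]
          omega

lemma fp_content (hn : 1 ≤ n) (hc : cpar < n) (hK : 2 * n ≤ Nat.fib (K+1))
    (p q : ℕ) (hq : q < (Gam M n cpar K (Wp M n cpar K p)).length) :
    Wp M n cpar K (ellp M n cpar K p + q) =
      (Gam M n cpar K (Wp M n cpar K p)).getD q (Wp M n cpar K 0) := by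
  obtain ⟨hpd, hpj⟩ := decode_spec M n cpar K p
  have hgd := Gam_getD M n cpar K (Wp M n cpar K p) q hq (Wp M n cpar K 0)
  rw [hgd]
  have hb1 : (Wp M n cpar K p).1 = Wle M n (idxp M n cpar K p) := rfl
  have hb2 : ((Wp M n cpar K p).2 : ℕ) = offp M n cpar K p := rfl
  rw [hb2, hb1]
  have hGlen : (Gam M n cpar K (Wp M n cpar K p)).length =
      if offp M n cpar K p = 0 then
        (Gex M n cpar K (Wle M n (idxp M n cpar K p))).length
          + 1 - cnt M n cpar K (Wle M n (idxp M n cpar K p))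
      else 1 := by
    rw [Gam_length, Wp_def]
  rw [hGlen] at hq
  have hcnt1 := cnt_pos M n cpar K (Wle M n (idxp M n cpar K p))
  have hle := cnt_le_Gex_len M n cpar K (Wle M n (idxp M n cpar K p))
  have hidxlt : (if offp M n cpar K p = 0 then 0 else
        (Gex M n cpar K (Wle M n (idxp M n cpar K p))).length
          - cnt M n cpar K (Wle M n (idxp M n cpar K p)) + offp M n cpar K p) + q
      < (Gex M n cpar K (Wle M n (idxp M n cpar K p))).length := by
    by_cases hj0 : offp M n cpar K p = 0
    · rw [if_pos hj0]
      rw [if_pos hj0] at hq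
      omega
    · rw [if_neg hj0]
      rw [if_neg hj0] at hq
      omega
  rw [Gex_W_getD M n cpar K (idxp M n cpar K p) _ hidxlt]
  rw [ellp_closed M n cpar K hn hc hK p]
  congr 1
  by_cases hj0 : offp M n cpar K p = 0
  · rw [hj0, stt_zero, if_pos rfl]
    omega
  · rw [stt_pos M n cpar K _ hj0, if_neg hj0]
    omega

end FP

section Tau

variable {σ Δ : Type} (M : DFAO Bool σ Δ) (n : ℕ) (cpar : ℕ) (K : ℕ)

lemma block_marked (hn : 1 ≤ n) (hc : cpar < n) (i : ℕ) :
    (ghat M n K (Wle M n i)).filter (markedB n cpar) =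
      (List.range (cntBelow n cpar (ellk M n K (i+1)) - cntBelow n cpar (ellk M n K i))).map
        (fun t => Wle M n (n * (cntBelow n cpar (ellk M n K i) + t) + cpar)) := by
  have hlen : ellk M n K (i+1) = ellk M n K i + (ghat M n K (Wle M n i)).length := by
    have := ellk_len M n K i
    have := ellk_le M n K i
    omega
  conv_lhs => rw [block_lemma M n K i, ellk_len M n K i]
  rw [filter_marked_segment M n cpar hn hc (ellk M n K i) ((ghat M n K (Wle M n i)).length),
    ← hlen]

def tauB (b : BT M n cpar K) : Δ :=
  M.out ((((ghat M n K b.1).filter (markedB n cpar)).getD b.2.val (Wle M n 0)).2.1)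

lemma tau_correct (hn : 1 ≤ n) (hc : cpar < n) (hK : 2 * n ≤ Nat.fib (K+1)) (p : ℕ) :
    tauB M n cpar K (Wp M n cpar K p) = M.out (qstate M (n * p + cpar)) := by
  obtain ⟨hpd, hpj⟩ := decode_spec M n cpar K p
  set i := idxp M n cpar K p with hi
  set j := offp M n cpar K p with hj
  have hb1 : (Wp M n cpar K p).1 = Wle M n i := rfl
  have hb2 : ((Wp M n cpar K p).2 : ℕ) = j := rfl
  rw [tauB, hb2, hb1, block_marked M n cpar K hn hc i]
  have hjlt : j < cntBelow n cpar (ellk M n K (i+1)) - cntBelow n cpar (ellk M n K i) := by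
    have := (cnt_W_eq M n cpar K hn hc hK i).1
    omega
  rw [getD_map_range _ _ _ _ hjlt]
  rw [← sigW_eq_cntBelow M n cpar K hn hc hK i]
  rw [show sigW M n cpar K i + j = p from hpd]
  rw [Wle_state]

end Tau

end ZeckAux

namespace ZeckAux

section Final

variable {σ Δ : Type} (M : DFAO Bool σ Δ) (n : ℕ) (cpar : ℕ) (K : ℕ)

lemma Wp_zero_eq : Wp M n cpar K 0 = ⟨Wle M n 0, ⟨0, cnt_pos M n cpar K (Wle M n 0)⟩⟩ := by
  have h1 := idxp_zero M n cpar K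
  have h2 : offp M n cpar K 0 = 0 := by
    rw [offp, idxp_zero]
    have h0 : sigW M n cpar K 0 = 0 := rfl
    omega
  rw [Wp_def]
  exact sigma_mk_eq (congrArg (Wle M n) h1) ((Fin.heq_ext_iff (by rw [h1])).mpr (by simpa using h2))

lemma Gam_len_pos (b : BT M n cpar K) : 1 ≤ (Gam M n cpar K b).length := by
  have := Gam_ne_nil M n cpar K b
  have := List.length_pos_iff.mpr this
  omega

lemma Gam_head (hn : 1 ≤ n) (hc : cpar < n) (hK : 2 * n ≤ Nat.fib (K+1)) :
    (Gam M n cpar K (Wp M n cpar K 0)).head? = some (Wp M n cpar K 0) := by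
  have h := fp_content M n cpar K hn hc hK 0 0 (Gam_len_pos M n cpar K _)
  have hne := Gam_ne_nil M n cpar K (Wp M n cpar K 0)
  cases hl : Gam M n cpar K (Wp M n cpar K 0) with
  | nil => exact absurd hl hne
  | cons x xs =>
      rw [hl] at h
      have he : ellp M n cpar K 0 + 0 = 0 := rfl
      rw [he] at h
      simp only [List.getD_cons_zero] at h
      rw [List.head?_cons, ← h]

lemma Gam_W0_len_ge (hn : 1 ≤ n) (hc : cpar < n) (hK : 2 * n ≤ Nat.fib (K+1)) :
    2 ≤ (Gam M n cpar K (Wp M n cpar K 0)).length := by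
  rw [Gam_length, Wp_zero_eq]
  simp
  have h1 := S_ge M n cpar K hn hc hK 0
  have h2 := cnt_pos M n cpar K (Wle M n 0)
  have h3 := cnt_le_Gex_len M n cpar K (Wle M n 0)
  omega

lemma flatMap_len_ge (l : List (BT M n cpar K)) :
    l.length ≤ (l.flatMap (Gam M n cpar K)).length := by
  rw [List.length_flatMap]
  have := len_le_sum (l.map (fun x => (Gam M n cpar K x).length)) ?_
  · simpa using this
  · intro x hx
    simp only [List.mem_map] at hx
    obtain ⟨y, _, hy⟩ := hx
    rw [← hy]
    exact Gam_len_pos M n cpar K y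

lemma iter_grow (hn : 1 ≤ n) (hc : cpar < n) (hK : 2 * n ≤ Nat.fib (K+1)) :
    ∀ k, (∃ t, (applyMorphism (Gam M n cpar K))^[k] [Wp M n cpar K 0] = (Wp M n cpar K 0) :: t) ∧
      k + 1 ≤ ((applyMorphism (Gam M n cpar K))^[k] [Wp M n cpar K 0]).length := by
  intro k
  induction k with
  | zero => exact ⟨⟨[], rfl⟩, by simp⟩
  | succ k ih =>
      obtain ⟨⟨t, ht⟩, hlen⟩ := ih
      rw [Function.iterate_succ_apply', ht]
      have hexp : applyMorphism (Gam M n cpar K) (Wp M n cpar K 0 :: t) =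
          Gam M n cpar K (Wp M n cpar K 0) ++ t.flatMap (Gam M n cpar K) := by
        rw [applyMorphism, List.flatMap_cons]
      rw [hexp]
      constructor
      · obtain ⟨x, xs, hxx⟩ : ∃ x xs, Gam M n cpar K (Wp M n cpar K 0) = x :: xs := by
          cases hl : Gam M n cpar K (Wp M n cpar K 0) with
          | nil => exact absurd hl (Gam_ne_nil M n cpar K _)
          | cons x xs => exact ⟨x, xs, rfl⟩
        have hx : x = Wp M n cpar K 0 := by
          have := Gam_head M n cpar K hn hc hK
          rw [hxx] at this
          simpa using this
        rw [hxx, hx]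
        exact ⟨xs ++ t.flatMap (Gam M n cpar K), by simp⟩
      · rw [List.length_append]
        have h1 := Gam_W0_len_ge M n cpar K hn hc hK
        have h2 := flatMap_len_ge M n cpar K t
        have h3 : t.length = ((applyMorphism (Gam M n cpar K))^[k] [Wp M n cpar K 0]).length - 1 := by
          rw [ht]
          simp
        have h4 : 1 ≤ ((applyMorphism (Gam M n cpar K))^[k] [Wp M n cpar K 0]).length := by omega
        omega

lemma S_le (a : A1 σ n) :
    (Gex M n cpar K a).length ≤ Nat.fib (K + 3) * Nat.fib (K + 3) := by
  rw [Gex, List.length_flatMap]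
  have h1 : ∀ x ∈ (ghat M n K a).map (fun x => (grp M n cpar K x).length),
      x ≤ Nat.fib (K + 3) := by
    intro x hx
    simp only [List.mem_map] at hx
    obtain ⟨y, _, hy⟩ := hx
    rw [← hy, length_grp]
    calc cnt M n cpar K y ≤ (ghat M n K y).length := cnt_le_ghat_len M n cpar K y
      _ ≤ Nat.fib (K+3) := ghat_len_le M n K y
  calc ((ghat M n K a).map (fun x => (grp M n cpar K x).length)).sum
      ≤ ((ghat M n K a).map (fun x => (grp M n cpar K x).length)).length * Nat.fib (K+3) :=
        sum_le_mul _ _ h1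
    _ ≤ Nat.fib (K+3) * Nat.fib (K+3) := by
        simp only [List.length_map]
        have := ghat_len_le M n K a
        exact Nat.mul_le_mul_right _ this

lemma sum_gam_fin (a : A1 σ n) :
    ∑ j : Fin (cnt M n cpar K a), (Gam M n cpar K ⟨a, j⟩).length ≤
      (Gex M n cpar K a).length := by
  have hcnt := cnt_pos M n cpar K a
  have hle := cnt_le_Gex_len M n cpar K a
  obtain ⟨m, hm⟩ : ∃ m, cnt M n cpar K a = m + 1 := ⟨cnt M n cpar K a - 1, by omega⟩
  have hsum : ∀ j : Fin (cnt M n cpar K a), (Gam M n cpar K ⟨a, j⟩).length =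
      if (j : ℕ) = 0 then (Gex M n cpar K a).length + 1 - cnt M n cpar K a else 1 := by
    intro j
    rw [Gam_length]
  calc ∑ j : Fin (cnt M n cpar K a), (Gam M n cpar K ⟨a, j⟩).length
      = ∑ j : Fin (cnt M n cpar K a),
          (if (j : ℕ) = 0 then (Gex M n cpar K a).length + 1 - cnt M n cpar K a else 1) := by
        exact Finset.sum_congr rfl (fun j _ => hsum j)
    _ ≤ (Gex M n cpar K a).length := by
        rw [hm, Fin.sum_univ_succ]
        simp only [Fin.val_zero, Fin.val_succ]
        simp
        omega

end Final

end ZeckAux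

namespace ZeckAux

section Total

variable {σ Δ : Type} (M : DFAO Bool σ Δ) (n : ℕ) (cpar : ℕ) (K : ℕ)
variable [Fintype σ] [DecidableEq σ] [NeZero n]

def instFintypeBT : Fintype (BT M n cpar K) :=
  inferInstanceAs (Fintype (Σ a : A1 σ n, Fin (cnt M n cpar K a)))

lemma total_sum_le :
    (∑ b ∈ @Finset.univ (BT M n cpar K) (instFintypeBT M n cpar K), (Gam M n cpar K b).length)
      ≤ Fintype.card (A1 σ n) * (Nat.fib (K+3) * Nat.fib (K+3)) := by
  have h1 : (∑ b ∈ @Finset.univ (BT M n cpar K) (instFintypeBT M n cpar K),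
      (Gam M n cpar K b).length) =
      ∑ a : A1 σ n, ∑ j : Fin (cnt M n cpar K a), (Gam M n cpar K ⟨a, j⟩).length := by
    show (∑ b ∈ @Finset.univ (Σ a : A1 σ n, Fin (cnt M n cpar K a)) _,
      (Gam M n cpar K b).length) = _
    rw [← Finset.univ_sigma_univ, Finset.sum_sigma]
  rw [h1]
  calc ∑ a : A1 σ n, ∑ j : Fin (cnt M n cpar K a), (Gam M n cpar K ⟨a, j⟩).length
      ≤ ∑ _a : A1 σ n, Nat.fib (K+3) * Nat.fib (K+3) := by
        apply Finset.sum_le_sum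
        intro a _
        exact le_trans (sum_gam_fin M n cpar K a) (S_le M n cpar K a)
    _ = Fintype.card (A1 σ n) * (Nat.fib (K+3) * Nat.fib (K+3)) := by
        rw [Finset.sum_const, Finset.card_univ, smul_eq_mul]

end Total

end ZeckAux

set_option maxHeartbeats 1000000 in
theorem morphism_size_for_linear_subsequence :
    ∃ C : ℕ, ∀ (Δ : Type) (_ : Fintype Δ) (m : ℕ), 1 ≤ m →
      ∀ h : ℕ → Δ, FibGeneratedBy h m →
        ∀ n c : ℕ, 1 ≤ n → c < n →
          ∃ (A : Type) (instA : Fintype A) (γ : A → List A) (a₀ : A) (w : ℕ → A)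
            (τ : A → Δ),
            (∀ a : A, γ a ≠ []) ∧
            (∑ a ∈ @Finset.univ A instA, (γ a).length) ≤ C * m ^ 2 * n ^ 4 ∧
            (γ a₀).head? = some a₀ ∧
            Filter.Tendsto (fun k => ((applyMorphism γ)^[k] [a₀]).length)
              Filter.atTop Filter.atTop ∧
            w 0 = a₀ ∧ IsFixedPointOf γ w ∧
            ∀ i : ℕ, τ (w i) = h (n * i + c) := by
  use 400
  intro Δ instΔ m hm h hgen n c hn hc
  obtain ⟨σ, instσ, M, hcard, hM⟩ := hgen
  letI : Fintype σ := instσ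
  haveI : NeZero n := ⟨by omega⟩
  haveI : DecidableEq σ := Classical.decEq σ
  have hKex : ∃ K, 2 * n ≤ Nat.fib (K + 1) ∧ Nat.fib (K + 3) ≤ 10 * n := by
    have hEx : ∃ k, 2 * n ≤ Nat.fib (k + 1) := by
      refine ⟨2 * n + 1, ?_⟩
      have h1 := ZeckAux.succ_le_fib (2 * n)
      have h2 : Nat.fib (2 * n + 2) ≤ Nat.fib (2 * n + 1 + 1) := Nat.fib_mono (by omega)
      omega
    refine ⟨Nat.find hEx, Nat.find_spec hEx, ?_⟩
    have hK := Nat.find_spec hEx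
    rcases Nat.eq_zero_or_pos (Nat.find hEx) with hK0 | hKpos
    · exfalso
      rw [hK0] at hK
      have h01 : Nat.fib (0 + 1) = 1 := rfl
      omega
    · obtain ⟨k', hk'⟩ : ∃ k', Nat.find hEx = k' + 1 := ⟨Nat.find hEx - 1, by omega⟩
      have hmin : ¬ (2 * n ≤ Nat.fib (k' + 1)) := by
        have := Nat.find_min hEx (m := k') (by omega)
        exact this
      push_neg at hmin
      have h1 : Nat.fib (k' + 2) = Nat.fib k' + Nat.fib (k' + 1) := ZeckAux.fib_succ_succ k'
      have h2 : Nat.fib (k' + 3) = Nat.fib (k' + 1) + Nat.fib (k' + 2) :=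
        ZeckAux.fib_succ_succ (k' + 1)
      have h3 : Nat.fib (k' + 4) = Nat.fib (k' + 2) + Nat.fib (k' + 3) :=
        ZeckAux.fib_succ_succ (k' + 2)
      have hmono : Nat.fib k' ≤ Nat.fib (k' + 1) := Nat.fib_mono (by omega)
      rw [hk', show k' + 1 + 3 = k' + 4 from by omega]
      omega
  obtain ⟨K, hK, hKfib⟩ := hKex
  refine ⟨ZeckAux.BT M n c K, ZeckAux.instFintypeBT M n c K, ZeckAux.Gam M n c K,
    ZeckAux.Wp M n c K 0, ZeckAux.Wp M n c K, ZeckAux.tauB M n c K,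
    ZeckAux.Gam_ne_nil M n c K, ?_, ?_, ?_, rfl, ?_, ?_⟩
  · -- size bound
    have htot := ZeckAux.total_sum_le M n c K
    have hcardA1 : Fintype.card (ZeckAux.A1 σ n) = 4 * Fintype.card σ * n ^ 2 := by
      show Fintype.card (Bool × σ × Bool × ZMod n × ZMod n) = _
      rw [Fintype.card_prod, Fintype.card_prod, Fintype.card_prod, Fintype.card_prod,
        Fintype.card_bool, ZMod.card]
      ring
    rw [hcardA1] at htot
    have hb1 : 4 * Fintype.card σ * n ^ 2 * (Nat.fib (K+3) * Nat.fib (K+3)) ≤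
        4 * m * n ^ 2 * ((10 * n) * (10 * n)) := by
      apply Nat.mul_le_mul
      · apply Nat.mul_le_mul_right
        apply Nat.mul_le_mul_left
        exact hcard
      · exact Nat.mul_le_mul hKfib hKfib
    have hb2 : 4 * m * n ^ 2 * ((10 * n) * (10 * n)) = 400 * m * n ^ 4 := by ring
    have hb3 : 400 * m * n ^ 4 ≤ 400 * m ^ 2 * n ^ 4 := by
      have : m ≤ m ^ 2 := by nlinarith
      exact Nat.mul_le_mul_right _ (Nat.mul_le_mul_left _ this)
    omega
  · exact ZeckAux.Gam_head M n c K hn hc hK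
  · apply Filter.tendsto_atTop_mono (fun k => (ZeckAux.iter_grow M n c K hn hc hK k).2)
    exact Filter.tendsto_add_atTop_nat 1
  · refine ⟨ZeckAux.ellp M n c K, rfl, fun i => rfl, ?_⟩
    intro i j hj
    have := ZeckAux.fp_content M n c K hn hc hK i j hj
    rwa [List.getD_eq_getElem _ _ hj] at this
  · intro i
    have h1 := ZeckAux.tau_correct M n c K hn hc hK i
    have h2 := hM (ZeckAux.zeck (n * i + c)) (ZeckAux.valid_zeck _)
    rw [ZeckAux.fibVal_zeck] at h2
    rw [h1, ← h2]
    rfl
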